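/- Let G = (V,A) be a finite simple graph in which every vertex has degree at least 2, n = n(G) = W ⊕ z its graph algebra over a field k of characteristic zero, and δ a nearly coboundary Lie bialgebra structure on n (δ|_z = 0). Write δ(v) = Σ_{α∈A} D_α(v)∧α + Φ*(v) for v ∈ W, with linear maps D_α : W → W and Φ* : W → Λ²z. Then D_α D_β = D_β D_α for all edges α, β ∈ A. -/

import Mathlib

open TensorProduct

set_option synthInstance.maxHeartbeats 1000000
set_option maxHeartbeats 1000000

/-- The adjoint action of a Lie algebra `g` on `g ⊗ g`, determined by
`x · (a ⊗ b) = ⁅x,a⁆ ⊗ b + a ⊗ ⁅x,b⁆`. -/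
noncomputable def tAct (k g : Type*) [CommRing k] [LieRing g] [LieAlgebra k g] (x : g) :
    g ⊗[k] g →ₗ[k] g ⊗[k] g :=
  TensorProduct.map (LieAlgebra.ad k g x) LinearMap.id
    + TensorProduct.map LinearMap.id (LieAlgebra.ad k g x)

/-- The cyclic rotation `(a⊗b)⊗c ↦ (c⊗a)⊗b` on `(g⊗g)⊗g`. -/
noncomputable def tCyc (k g : Type*) [CommRing k] [AddCommGroup g] [Module k g] :
    (g ⊗[k] g) ⊗[k] g →ₗ[k] (g ⊗[k] g) ⊗[k] g :=
  ((TensorProduct.assoc k g g g).symm.toLinearMap).comp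
    (TensorProduct.comm k (g ⊗[k] g) g).toLinearMap

/-- For submodules `P Q ⊆ g`, the image of `P ⊗ Q` in `g ⊗ g`. -/
noncomputable def tsub (k g : Type*) [CommRing k] [AddCommGroup g] [Module k g]
    (P Q : Submodule k g) : Submodule k (g ⊗[k] g) :=
  LinearMap.range (TensorProduct.map P.subtype Q.subtype)

/-- The degree (valency) of a vertex `e` in the graph with edge set `A` and
endpoint maps `src`, `tgt`. -/
def deg {V A : Type*} [Fintype A] [DecidableEq V] (src tgt : A → V) (e : V) : ℕ :=
  (Finset.univ.filter (fun a : A => src a = e ∨ tgt a = e)).card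


section Aux
variable {k N : Type*} [CommRing k] [AddCommGroup N] [Module k N]

/-- Auxiliary: the bilinear functional `x ⊗ y ↦ f1 x * f2 y` on `N ⊗ N`. -/
noncomputable def biF (f1 f2 : N →ₗ[k] k) : N ⊗[k] N →ₗ[k] k :=
  TensorProduct.lift (f1.smulRight f2)

@[simp] lemma biF_tmul (f1 f2 : N →ₗ[k] k) (x y : N) :
    biF f1 f2 (x ⊗ₜ[k] y) = f1 x * f2 y := by
  simp [biF, smul_eq_mul]

/-- Auxiliary: the trilinear functional `(x ⊗ y) ⊗ z ↦ f1 x * f2 y * f3 z`. -/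
noncomputable def triF (f1 f2 f3 : N →ₗ[k] k) : (N ⊗[k] N) ⊗[k] N →ₗ[k] k :=
  TensorProduct.lift ((biF f1 f2).smulRight f3)

@[simp] lemma triF_tmul (f1 f2 f3 : N →ₗ[k] k) (t : N ⊗[k] N) (z : N) :
    triF f1 f2 f3 (t ⊗ₜ[k] z) = biF f1 f2 t * f3 z := by
  simp [triF, smul_eq_mul]

lemma triF_cyc (f1 f2 f3 : N →ₗ[k] k) (t : (N ⊗[k] N) ⊗[k] N) :
    triF f1 f2 f3 (tCyc k N t) = triF f2 f3 f1 t := by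
  have h : (triF f1 f2 f3).comp (tCyc k N) = triF f2 f3 f1 := by
    apply TensorProduct.ext_threefold
    intro x y z
    simp [tCyc]
    ring
  calc triF f1 f2 f3 (tCyc k N t) = ((triF f1 f2 f3).comp (tCyc k N)) t := rfl
  _ = triF f2 f3 f1 t := by rw [h]

end Aux

/-- let `G` be a finite simple graph in which every vertex has degree at
least 2, `n = n(G) = W ⊕ z` its graph algebra, and `δ` a nearly coboundary Lie bialgebra
structure on `n` (`δ|_z = 0`), written as `δ(v) = Σ_α D_α(v)∧α + Φ*(v)` for `v ∈ W` with
`D_α : W → W` and `Φ* : W → Λ²z` (wedges modelled as antisymmetric tensors).  Then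
`D_α D_β = D_β D_α` for all edges `α, β`. -/
theorem stmt15 (k V A N : Type*) [Field k] [CharZero k]
    [Fintype V] [Fintype A] [DecidableEq V] [DecidableEq A]
    [LieRing N] [LieAlgebra k N]
    (src tgt : A → V)
    (hloop : ∀ a, src a ≠ tgt a)
    (hsimple : ∀ a b : A,
      (src a = src b ∧ tgt a = tgt b) ∨ (src a = tgt b ∧ tgt a = src b) → a = b)
    (B : Module.Basis (V ⊕ A) k N)
    (hbz : ∀ (a : A) (x : N), ⁅B (Sum.inr a), x⁆ = 0)
    (hbe : ∀ a : A, ⁅B (Sum.inl (src a)), B (Sum.inl (tgt a))⁆ = B (Sum.inr a))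
    (hbe0 : ∀ i j : V,
      (∀ a : A, ¬((src a = i ∧ tgt a = j) ∨ (src a = j ∧ tgt a = i))) →
      ⁅B (Sum.inl i), B (Sum.inl j)⁆ = 0)
    (hdeg : ∀ e : V, 2 ≤ deg src tgt e)
    (W Z : Submodule k N)
    (hW : W = Submodule.span k (Set.range fun i : V => B (Sum.inl i)))
    (hZ : Z = Submodule.span k (Set.range fun a : A => B (Sum.inr a)))
    -- δ is a Lie bialgebra structure on n:
    (δ : N →ₗ[k] N ⊗[k] N)
    (hanti : ∀ x, TensorProduct.comm k N N (δ x) = - δ x)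
    (hcoJ : ∀ x, (TensorProduct.map δ LinearMap.id) (δ x)
        + tCyc k N ((TensorProduct.map δ LinearMap.id) (δ x))
        + tCyc k N (tCyc k N ((TensorProduct.map δ LinearMap.id) (δ x))) = 0)
    (hcoc : ∀ x y, δ ⁅x, y⁆ = tAct k N x (δ y) - tAct k N y (δ x))
    -- δ is nearly coboundary:
    (hnc : ∀ z ∈ Z, δ z = 0)
    -- decomposition δ(v) = Σ_α D_α(v)∧α + Φ*(v) on W:
    (D : A → (W →ₗ[k] W))
    (P : W → N ⊗[k] N)
    (hP : ∀ v : W, P v ∈ tsub k N Z Z)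
    (hform : ∀ v : W, δ (v : N)
      = ∑ a : A, (((D a v : W) : N) ⊗ₜ[k] B (Sum.inr a)
          - B (Sum.inr a) ⊗ₜ[k] ((D a v : W) : N)) + P v) :
    ∀ a b : A, (D a).comp (D b) = (D b).comp (D a) := by
  classical
  have hBZ : ∀ c : A, B (Sum.inr c) ∈ Z := fun c => hZ ▸ Submodule.subset_span ⟨c, rfl⟩
  -- coordinate vanishing facts
  have hWrepr : ∀ (w : W) (c : A), B.coord (Sum.inr c) (w : N) = 0 := by
    intro w c
    have hle : W ≤ LinearMap.ker (B.coord (Sum.inr c)) := by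
      rw [hW, Submodule.span_le]
      rintro _ ⟨i, rfl⟩
      simp [LinearMap.mem_ker, Module.Basis.coord_apply, Module.Basis.repr_self, Finsupp.single_apply]
    exact hle w.2
  have hZrepr : ∀ z ∈ Z, ∀ i : V, B.coord (Sum.inl i) z = 0 := by
    intro z hz i
    have hle : Z ≤ LinearMap.ker (B.coord (Sum.inl i)) := by
      rw [hZ, Submodule.span_le]
      rintro _ ⟨c, rfl⟩
      simp [LinearMap.mem_ker, Module.Basis.coord_apply, Module.Basis.repr_self, Finsupp.single_apply]
    exact hle hz
  have hδZ : δ.comp Z.subtype = 0 := by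
    ext z
    exact hnc (z : N) z.2
  have hmapP : ∀ w : W, (TensorProduct.map δ LinearMap.id) (P w) = 0 := by
    intro w
    obtain ⟨t, ht⟩ := hP w
    rw [← ht, ← LinearMap.comp_apply, ← TensorProduct.map_comp, hδZ,
      TensorProduct.map_zero_left, LinearMap.zero_apply]
  have hbiFP : ∀ g1 g2 : N →ₗ[k] k, ((∀ z ∈ Z, g1 z = 0) ∨ (∀ z ∈ Z, g2 z = 0)) →
      ∀ w : W, biF g1 g2 (P w) = 0 := by
    intro g1 g2 hg w
    obtain ⟨t, ht⟩ := hP w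
    have h0 : (biF g1 g2).comp (TensorProduct.map Z.subtype Z.subtype) = 0 := by
      apply TensorProduct.ext'
      intro z1 z2
      rcases hg with h | h
      · simp [TensorProduct.map_tmul, h (z1 : N) z1.2]
      · simp [TensorProduct.map_tmul, h (z2 : N) z2.2]
    rw [← ht, ← LinearMap.comp_apply, h0, LinearMap.zero_apply]
  have hδE : ∀ c : A, δ (B (Sum.inr c)) = 0 := fun c => hnc _ (hBZ c)
  intro a b
  ext v
  refine B.ext_elem fun ι => ?_
  rcases ι with i | c
  swap
  · -- `inr` coordinates vanish on `W`
    have h1 := hWrepr ((D a).comp (D b) v) c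
    have h2 := hWrepr ((D b).comp (D a) v) c
    rw [Module.Basis.coord_apply] at h1 h2
    simpa using h1.trans h2.symm
  -- main case: compare `inl i` coordinates using co-Jacobi
  set E := (TensorProduct.map δ LinearMap.id) (δ (v : N)) with hEdef
  have hE : E = ∑ c : A, (δ (((D c v : W) : N))) ⊗ₜ[k] B (Sum.inr c) := by
    rw [hEdef, hform v, map_add, map_sum, hmapP, add_zero]
    refine Finset.sum_congr rfl fun c _ => ?_
    rw [map_sub, TensorProduct.map_tmul, TensorProduct.map_tmul, hδE c,
      TensorProduct.zero_tmul, sub_zero, LinearMap.id_coe, id_eq]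
  have hval : ∀ g1 g2 g3 : N →ₗ[k] k,
      triF g1 g2 g3 E = ∑ c : A, ((∑ d : A,
        (g1 (((D d (D c v) : W) : N)) * g2 (B (Sum.inr d))
          - g1 (B (Sum.inr d)) * g2 (((D d (D c v) : W) : N))))
        + biF g1 g2 (P (D c v))) * g3 (B (Sum.inr c)) := by
    intro g1 g2 g3
    rw [hE, map_sum]
    refine Finset.sum_congr rfl fun c _ => ?_
    rw [triF_tmul]
    congr 1
    rw [hform (D c v), map_add, map_sum]
    congr 1
    refine Finset.sum_congr rfl fun d _ => ?_
    rw [map_sub, biF_tmul, biF_tmul]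
  set f1 := B.coord (Sum.inl i) with hf1
  set f2 := B.coord (Sum.inr a) with hf2
  set f3 := B.coord (Sum.inr b) with hf3
  have key : f1 (((D a (D b v) : W) : N)) - f1 (((D b (D a v) : W) : N)) = 0 := by
    have hcJ := congrArg (triF f1 f2 f3) (hcoJ (v : N))
    rw [map_add, map_add, map_zero, triF_cyc, triF_cyc, triF_cyc] at hcJ
    have e1 : triF f1 f2 f3 E = f1 (((D a (D b v) : W) : N)) := by
      rw [hval f1 f2 f3]
      have : ∀ c : A, ((∑ d : A,
          (f1 (((D d (D c v) : W) : N)) * f2 (B (Sum.inr d))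
            - f1 (B (Sum.inr d)) * f2 (((D d (D c v) : W) : N))))
          + biF f1 f2 (P (D c v))) * f3 (B (Sum.inr c))
          = if c = b then f1 (((D a (D c v) : W) : N)) else 0 := by
        intro c
        rw [hbiFP f1 f2 (Or.inl fun z hz => hZrepr z hz i) (D c v), add_zero]
        have hsum : (∑ d : A,
            (f1 (((D d (D c v) : W) : N)) * f2 (B (Sum.inr d))
              - f1 (B (Sum.inr d)) * f2 (((D d (D c v) : W) : N))))
            = f1 (((D a (D c v) : W) : N)) := by
          have : ∀ d : A, (f1 (((D d (D c v) : W) : N)) * f2 (B (Sum.inr d))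
              - f1 (B (Sum.inr d)) * f2 (((D d (D c v) : W) : N)))
              = if d = a then f1 (((D d (D c v) : W) : N)) else 0 := by
            intro d
            rw [hf1, hf2]
            rw [show B.coord (Sum.inl i) (B (Sum.inr d)) = 0 by
              simp [Module.Basis.coord_apply, Module.Basis.repr_self, Finsupp.single_apply]]
            rw [show B.coord (Sum.inr a) (B (Sum.inr d)) = if d = a then 1 else 0 by
              simp [Module.Basis.coord_apply, Module.Basis.repr_self, Finsupp.single_apply]]
            by_cases hd : d = a <;> simp [hd]
          rw [Finset.sum_congr rfl fun d _ => this d]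
          simp
        rw [hsum, hf3,
          show B.coord (Sum.inr b) (B (Sum.inr c)) = if c = b then 1 else 0 by
            simp [Module.Basis.coord_apply, Module.Basis.repr_self, Finsupp.single_apply]]
        by_cases hc : c = b <;> simp [hc]
      rw [Finset.sum_congr rfl fun c _ => this c]
      simp
    have e2 : triF f2 f3 f1 E = 0 := by
      rw [hval f2 f3 f1]
      refine Finset.sum_eq_zero fun c _ => ?_
      rw [hf1, show B.coord (Sum.inl i) (B (Sum.inr c)) = 0 by
        simp [Module.Basis.coord_apply, Module.Basis.repr_self, Finsupp.single_apply]]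
      rw [mul_zero]
    have e3 : triF f3 f1 f2 E = - f1 (((D b (D a v) : W) : N)) := by
      rw [hval f3 f1 f2]
      have : ∀ c : A, ((∑ d : A,
          (f3 (((D d (D c v) : W) : N)) * f1 (B (Sum.inr d))
            - f3 (B (Sum.inr d)) * f1 (((D d (D c v) : W) : N))))
          + biF f3 f1 (P (D c v))) * f2 (B (Sum.inr c))
          = if c = a then - f1 (((D b (D c v) : W) : N)) else 0 := by
        intro c
        rw [hbiFP f3 f1 (Or.inr fun z hz => hZrepr z hz i) (D c v), add_zero]
        have hsum : (∑ d : A,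
            (f3 (((D d (D c v) : W) : N)) * f1 (B (Sum.inr d))
              - f3 (B (Sum.inr d)) * f1 (((D d (D c v) : W) : N))))
            = - f1 (((D b (D c v) : W) : N)) := by
          have : ∀ d : A, (f3 (((D d (D c v) : W) : N)) * f1 (B (Sum.inr d))
              - f3 (B (Sum.inr d)) * f1 (((D d (D c v) : W) : N)))
              = if d = b then - f1 (((D d (D c v) : W) : N)) else 0 := by
            intro d
            rw [hf3, hf1]
            rw [show B.coord (Sum.inl i) (B (Sum.inr d)) = 0 by
              simp [Module.Basis.coord_apply, Module.Basis.repr_self, Finsupp.single_apply]]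
            rw [hWrepr (D d (D c v)) b]
            rw [show B.coord (Sum.inr b) (B (Sum.inr d)) = if d = b then 1 else 0 by
              simp [Module.Basis.coord_apply, Module.Basis.repr_self, Finsupp.single_apply]]
            by_cases hd : d = b <;> simp [hd]
          rw [Finset.sum_congr rfl fun d _ => this d]
          simp
        rw [hsum, hf2,
          show B.coord (Sum.inr a) (B (Sum.inr c)) = if c = a then 1 else 0 by
            simp [Module.Basis.coord_apply, Module.Basis.repr_self, Finsupp.single_apply]]
        by_cases hc : c = a <;> simp [hc]
      rw [Finset.sum_congr rfl fun c _ => this c]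
      simp
    rw [e1, e2, e3] at hcJ
    linear_combination hcJ
  have := sub_eq_zero.mp key
  simpa [f1, Module.Basis.coord_apply] using this
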